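/- Let Θ be a path-connected topological space and f : Θ → ℝ a continuous function such that for every c ∈ ℝ the sublevel set Θ_{f ≤ c} = {θ ∈ Θ : f(θ) ≤ c} is locally path-connected. Let p ∈ Θ be a point such that there exists θ ∈ Θ with f(θ) < f(p). Then the merge value of p equals the min-max value over paths: C_f(p) = M_f(p), where C_f(p) = inf { c ∈ ℝ : the connected component of p in Θ_{f ≤ c} contains a point θ with f(θ) < f(p) } and M_f(p) = inf { max_{t ∈ [0,1]} f(γ(t)) : γ : [0,1] → Θ continuous, γ(0) = p, f(γ(1)) < f(p) }. -/

import Mathlib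

open Set

/-- **Merge value equals path min-max value.**
Let `Θ` be a path-connected topological space and `f : Θ → ℝ` continuous, such that
every sublevel set `{θ | f θ ≤ c}` is locally path-connected (as a subspace).
Let `p` be a point such that some point has strictly smaller `f`-value.  Then the
merge value `C_f(p)` (the infimum of levels `c` at which the connected component of `p`
in the sublevel set `{f ≤ c}` contains a point of strictly smaller value) equals the
min-max value `M_f(p)` over continuous paths starting at `p` and ending at a point of
strictly smaller value. -/
theorem merge_value_eq_path_minimax
    {Θ : Type*} [TopologicalSpace Θ] [PathConnectedSpace Θ]
    (f : Θ → ℝ) (hf : Continuous f)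
    (hloc : ∀ c : ℝ, LocPathConnectedSpace ({θ : Θ | f θ ≤ c} : Set Θ))
    (p : Θ) (hp : ∃ θ : Θ, f θ < f p) :
    sInf {c : ℝ | ∃ θ ∈ connectedComponentIn {x : Θ | f x ≤ c} p, f θ < f p}
      = sInf {r : ℝ | ∃ γ : unitInterval → Θ, Continuous γ ∧ γ 0 = p ∧
          f (γ 1) < f p ∧ r = ⨆ t : unitInterval, f (γ t)} := by
  obtain ⟨θ₀, hθ₀⟩ := hp
  set A := {c : ℝ | ∃ θ ∈ connectedComponentIn {x : Θ | f x ≤ c} p, f θ < f p} with hA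
  set B := {r : ℝ | ∃ γ : unitInterval → Θ, Continuous γ ∧ γ 0 = p ∧
      f (γ 1) < f p ∧ r = ⨆ t : unitInterval, f (γ t)} with hB
  -- every path value lies in A
  have hBA : B ⊆ A := by
    rintro r ⟨γ, hγ, h0, h1, rfl⟩
    have hbdd : BddAbove (Set.range fun t => f (γ t)) :=
      (isCompact_range (hf.comp hγ)).bddAbove
    have hsub : Set.range γ ⊆ {x : Θ | f x ≤ ⨆ t : unitInterval, f (γ t)} := by
      rintro x ⟨t, rfl⟩; exact le_ciSup hbdd t
    have hconn : IsPreconnected (Set.range γ) := (isConnected_range hγ).isPreconnected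
    have hmem : p ∈ Set.range γ := ⟨0, h0⟩
    have hss := hconn.subset_connectedComponentIn hmem hsub
    exact ⟨γ 1, hss (mem_range_self 1), h1⟩
  -- B is nonempty
  have hBne : B.Nonempty := by
    obtain ⟨path⟩ := PathConnectedSpace.joined p θ₀
    refine ⟨_, ⟨fun t => path t, path.continuous, path.source, ?_, rfl⟩⟩
    show f (path 1) < f p
    rw [path.target]; exact hθ₀
  have hAne : A.Nonempty := hBne.mono hBA
  -- bounds below
  have hBbdd : BddBelow B := by
    refine ⟨f p, ?_⟩
    rintro r ⟨γ, hγ, h0, h1, rfl⟩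
    have hbdd : BddAbove (Set.range fun t => f (γ t)) :=
      (isCompact_range (hf.comp hγ)).bddAbove
    calc f p = f (γ 0) := by rw [h0]
    _ ≤ _ := le_ciSup hbdd 0
  have hAbdd : BddBelow A := by
    refine ⟨f p, ?_⟩
    intro c hc
    obtain ⟨θ, hθ, -⟩ := hc
    have hne : (connectedComponentIn {x : Θ | f x ≤ c} p).Nonempty := ⟨θ, hθ⟩
    have hpc : p ∈ {x : Θ | f x ≤ c} := connectedComponentIn_nonempty_iff.mp hne
    exact hpc
  -- for each c ∈ A there is a path value ≤ c
  have key : ∀ c ∈ A, ∃ r ∈ B, r ≤ c := by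
    rintro c ⟨θ, hθmem, hθlt⟩
    have hpc : p ∈ {x : Θ | f x ≤ c} := connectedComponentIn_nonempty_iff.mp ⟨θ, hθmem⟩
    haveI : LocallyPathConnectedSpace {x : Θ | f x ≤ c} := hloc c
    rw [connectedComponentIn_eq_image hpc] at hθmem
    obtain ⟨θ', hθ', hval⟩ := hθmem
    have hpath : θ' ∈ pathComponent (⟨p, hpc⟩ : {x : Θ | f x ≤ c}) := by
      rw [pathComponent_eq_connectedComponent]; exact hθ'
    obtain ⟨path⟩ := hpath
    refine ⟨⨆ t : unitInterval, f ((path t : Θ)),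
      ⟨fun t => (path t : Θ), continuous_subtype_val.comp path.continuous, by
        show ((path 0 : {x : Θ | f x ≤ c}) : Θ) = p; rw [path.source], by
        show f ((path 1 : {x : Θ | f x ≤ c}) : Θ) < f p
        rw [path.target, hval]; exact hθlt, rfl⟩, ?_⟩
    exact ciSup_le fun t => (path t).2
  refine le_antisymm (csInf_le_csInf hAbdd hBne hBA) (le_csInf hAne fun c hc => ?_)
  obtain ⟨r, hrB, hrc⟩ := key c hc
  exact (csInf_le hBbdd hrB).trans hrc
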